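/- arXiv:1812.10992 — 9 statements merged into one kernel-verified Lean document; each statement's English description precedes it below -/
import Mathlib

section
/- Define the slanting rain of length ℓ with step b and origin (x₀,y₀) as the set of rational points consisting of the base {(x₀+κb, y₀) : 0 ≤ κ ≤ ℓ-1} together with the layers {(x₀+κb, y₀+1/(kb)) : 1 ≤ k ≤ ℓ-1, 0 ≤ κ ≤ ℓ-1-k}. Then the layer points are exactly the apexes (upper vertices) of the right triangles of area 1/2 of the form {(x,y),(x+c,y),(x,y+a)} with ac = 1 whose two lower vertices lie in the base. -/
/-- The base of a slanting rain of length `ℓ` with step `b` and origin `(x₀, y₀)`. -/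
def rainBase (x₀ y₀ b : ℚ) (ℓ : ℕ) : Set (ℚ × ℚ) :=
  {p | ∃ κ : ℕ, κ ≤ ℓ - 1 ∧ p = (x₀ + κ * b, y₀)}

/-- The layers of a slanting rain of length `ℓ` with step `b` and origin `(x₀, y₀)`. -/
def rainLayers (x₀ y₀ b : ℚ) (ℓ : ℕ) : Set (ℚ × ℚ) :=
  {p | ∃ k κ : ℕ, 1 ≤ k ∧ k ≤ ℓ - 1 ∧ κ ≤ ℓ - 1 - k ∧
    p = (x₀ + κ * b, y₀ + 1 / (k * b))}

/-- The layer points of a slanting rain are exactly the apexes of the standard triangles of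
area `1/2` whose two lower vertices lie in the base. -/
theorem rainLayers_eq_apexes (x₀ y₀ b : ℚ) (hb : 0 < b) (ℓ : ℕ) (hℓ : 2 ≤ ℓ) (p : ℚ × ℚ) :
    p ∈ rainLayers x₀ y₀ b ℓ ↔
      ∃ x y a c : ℚ, 0 < a ∧ 0 < c ∧ a * c = 1 ∧
        (x, y) ∈ rainBase x₀ y₀ b ℓ ∧ (x + c, y) ∈ rainBase x₀ y₀ b ℓ ∧
        p = (x, y + a) := by
  constructor
  · rintro ⟨k, κ, hk1, hkl, hκ, rfl⟩
    have hkb : (0:ℚ) < k * b := by positivity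
    refine ⟨x₀ + κ * b, y₀, 1 / (k * b), k * b, by positivity, hkb, ?_, ⟨κ, ?_, rfl⟩, ⟨κ + k, ?_, ?_⟩, rfl⟩
    · field_simp
    · omega
    · omega
    · push_cast; ring_nf
  · rintro ⟨x, y, a, c, ha, hc, hac, ⟨κ₁, hκ₁, hxy⟩, ⟨κ₂, hκ₂, hxy₂⟩, rfl⟩
    have hx : x = x₀ + κ₁ * b := (Prod.mk.injEq .. ▸ hxy).1
    have hy : y = y₀ := (Prod.mk.injEq .. ▸ hxy).2
    have hx₂ : x + c = x₀ + κ₂ * b := (Prod.mk.injEq .. ▸ hxy₂).1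
    have hcval : c = (κ₂ - κ₁ : ℚ) * b := by rw [hx] at hx₂; linarith [hx₂]
    have hlt : κ₁ < κ₂ := by
      by_contra h
      push_neg at h
      have : (κ₂:ℚ) ≤ κ₁ := by exact_mod_cast h
      nlinarith
    refine ⟨κ₂ - κ₁, κ₁, by omega, by omega, by omega, ?_⟩
    have haval : a = 1 / ((κ₂ - κ₁ : ℕ) * b) := by
      have hcast : ((κ₂ - κ₁ : ℕ) : ℚ) = (κ₂ : ℚ) - κ₁ := by
        push_cast [Nat.cast_sub hlt.le]; ring
      rw [hcast, ← hcval]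
      field_simp
      linarith [hac]
    rw [hx, hy, haval]
end

section
/- For any ℓ ≥ 2, the layers of a slanting rain of length L = ℓ!·ℓ + 1 (with any rational step b > 0 and any rational origin) contain, as a subset, a slanting rain of length ℓ. -/
/-- The layers of a slanting rain of length `ℓ! · ℓ + 1` contain a slanting rain of length `ℓ`. -/
theorem subRain_exists (ℓ : ℕ) (hℓ : 2 ≤ ℓ) (x₀ y₀ b : ℚ) (hb : 0 < b) :
    ∃ x₀' y₀' b' : ℚ, 0 < b' ∧
      rainBase x₀' y₀' b' ℓ ∪ rainLayers x₀' y₀' b' ℓ ⊆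
        rainLayers x₀ y₀ b (ℓ.factorial * ℓ + 1) := by
  have hF : 0 < ℓ.factorial := ℓ.factorial_pos
  have hFQ : (0:ℚ) < (ℓ.factorial : ℚ) := by exact_mod_cast hF
  refine ⟨x₀, y₀ + 1 / (ℓ.factorial * b), ℓ.factorial * b, mul_pos hFQ hb, ?_⟩
  rintro p (⟨κ, hκ, rfl⟩ | ⟨k, κ, hk1, hk2, hκ, rfl⟩)
  · -- base of small rain lies in layer ℓ! of the big rain
    refine ⟨ℓ.factorial, κ * ℓ.factorial, hF, ?_, ?_, ?_⟩
    · rw [Nat.add_sub_cancel]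
      exact Nat.le_mul_of_pos_right _ (by omega)
    · rw [Nat.add_sub_cancel]
      apply Nat.le_sub_of_add_le
      calc κ * ℓ.factorial + ℓ.factorial = (κ + 1) * ℓ.factorial := by ring
        _ ≤ ℓ * ℓ.factorial := Nat.mul_le_mul_right _ (by omega)
        _ = ℓ.factorial * ℓ := Nat.mul_comm _ _
    · simp only [Prod.mk.injEq]
      constructor <;> push_cast <;> ring
  · -- layer k of small rain lies in layer k·ℓ!/(k+1) of the big rain
    have hk : k + 1 ≤ ℓ := by omega
    obtain ⟨d, hd⟩ : (k + 1) ∣ ℓ.factorial := Nat.dvd_factorial (by omega) hk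
    have hd1 : 0 < d := by
      rcases Nat.eq_zero_or_pos d with h | h
      · rw [h, Nat.mul_zero] at hd; omega
      · exact h
    refine ⟨k * d, κ * ℓ.factorial, Nat.mul_pos (by omega) hd1, ?_, ?_, ?_⟩
    · rw [Nat.add_sub_cancel]
      calc k * d ≤ (k + 1) * d := Nat.mul_le_mul_right _ (by omega)
        _ = ℓ.factorial := hd.symm
        _ ≤ ℓ.factorial * ℓ := Nat.le_mul_of_pos_right _ (by omega)
    · rw [Nat.add_sub_cancel]
      apply Nat.le_sub_of_add_le
      have h1 : κ * ℓ.factorial + k * d ≤ (ℓ - 1) * ℓ.factorial + (k + 1) * d :=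
        Nat.add_le_add (Nat.mul_le_mul_right _ (by omega)) (Nat.mul_le_mul_right _ (by omega))
      rw [← hd] at h1
      calc κ * ℓ.factorial + k * d ≤ (ℓ - 1) * ℓ.factorial + ℓ.factorial := h1
        _ = (ℓ - 1 + 1) * ℓ.factorial := by ring
        _ = ℓ * ℓ.factorial := by rw [Nat.sub_add_cancel (by omega)]
        _ = ℓ.factorial * ℓ := Nat.mul_comm _ _
    · have hb0 : b ≠ 0 := ne_of_gt hb
      have hk0 : (k : ℚ) ≠ 0 := by exact_mod_cast (by omega : k ≠ 0)
      have hd0 : (d : ℚ) ≠ 0 := by exact_mod_cast (by omega : d ≠ 0)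
      have hFd : (ℓ.factorial : ℚ) = (k + 1) * d := by exact_mod_cast hd
      simp only [Prod.mk.injEq]
      constructor
      · push_cast; ring
      · push_cast [hFd]
        field_simp
        ring
end

section
/- If the rational points of a slanting rain whose base is a monochromatic horizontal arithmetic progression of 5 points with step b are colored so that the base has one color, then either some layer point has the base's color, or among the layer points at heights 1/b and 1/(2b) there exist three points forming a standard triangle of area 1/2 all colored differently from the base but pairwise in the same (second) color — in particular, in any 2-coloring of the slanting rain of length 5 whose base is monochromatic, there is a monochromatic standard triangle of area 1/2. -/
lemma fin2_ne_ne {a b c : Fin 2} (h1 : a ≠ c) (h2 : b ≠ c) : a = b := by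
  revert a b c; decide

/-- In a slanting rain of length 5 whose base is monochromatic under a 2-coloring, either some
layer point has the base's color, or among the layer points at heights `1/b` and `1/(2b)` there
is a standard triangle of area `1/2` all of whose vertices have the other color. In particular
there is always a monochromatic standard triangle of area `1/2`. -/
theorem rain5_mono_triangle (x₀ y₀ b : ℚ) (hb : 0 < b) (χ : ℚ × ℚ → Fin 2) (c₀ : Fin 2)
    (hbase : ∀ κ : ℕ, κ ≤ 4 → χ (x₀ + κ * b, y₀) = c₀) :
    ((∃ p ∈ rainLayers x₀ y₀ b 5, χ p = c₀) ∨
      ∃ x y a c : ℚ, 0 < a ∧ 0 < c ∧ a * c = 1 ∧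
        (x, y) ∈ rainLayers x₀ y₀ b 5 ∧ (x + c, y) ∈ rainLayers x₀ y₀ b 5 ∧
        (x, y + a) ∈ rainLayers x₀ y₀ b 5 ∧
        (y = y₀ + 1 / b ∨ y = y₀ + 1 / (2 * b)) ∧
        (y + a = y₀ + 1 / b ∨ y + a = y₀ + 1 / (2 * b)) ∧
        χ (x, y) ≠ c₀ ∧ χ (x, y) = χ (x + c, y) ∧ χ (x, y) = χ (x, y + a)) ∧
    ∃ x y a c : ℚ, 0 < a ∧ 0 < c ∧ a * c = 1 ∧
      (x, y) ∈ rainBase x₀ y₀ b 5 ∪ rainLayers x₀ y₀ b 5 ∧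
      (x + c, y) ∈ rainBase x₀ y₀ b 5 ∪ rainLayers x₀ y₀ b 5 ∧
      (x, y + a) ∈ rainBase x₀ y₀ b 5 ∪ rainLayers x₀ y₀ b 5 ∧
      χ (x, y) = χ (x + c, y) ∧ χ (x, y) = χ (x, y + a) := by
  have hbne : b ≠ 0 := ne_of_gt hb
  by_cases h : ∃ p ∈ rainLayers x₀ y₀ b 5, χ p = c₀
  · refine ⟨Or.inl h, ?_⟩
    obtain ⟨p, hp, hpc⟩ := h
    obtain ⟨k, κ, hk1, hk4, hκ, rfl⟩ := hp
    have hkpos : (0 : ℚ) < k := by exact_mod_cast hk1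
    refine ⟨x₀ + κ * b, y₀, 1 / (k * b), k * b, by positivity, by positivity,
      by field_simp, ?_, ?_, ?_, ?_, ?_⟩
    · exact Or.inl ⟨κ, by omega, rfl⟩
    · refine Or.inl ⟨κ + k, by omega, ?_⟩
      push_cast; ring_nf
    · exact Or.inr ⟨k, κ, hk1, hk4, hκ, rfl⟩
    · rw [hbase κ (by omega)]
      have := hbase (κ + k) (by omega)
      rw [← this]; congr 2; push_cast; ring
    · rw [hbase κ (by omega), hpc]
  · push_neg at h
    have h1 : (x₀, y₀ + 1 / (2 * b)) ∈ rainLayers x₀ y₀ b 5 := by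
      refine ⟨2, 0, by norm_num, by norm_num, by norm_num, ?_⟩
      norm_num
    have h2 : (x₀ + 2 * b, y₀ + 1 / (2 * b)) ∈ rainLayers x₀ y₀ b 5 := by
      refine ⟨2, 2, by norm_num, by norm_num, by norm_num, ?_⟩
      norm_num
    have h3 : (x₀, y₀ + 1 / (2 * b) + 1 / (2 * b)) ∈ rainLayers x₀ y₀ b 5 := by
      refine ⟨1, 0, by norm_num, by norm_num, by norm_num, ?_⟩
      have : y₀ + 1 / (2 * b) + 1 / (2 * b) = y₀ + 1 / ((1:ℕ) * b) := by
        push_cast; field_simp; ring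
      rw [Prod.mk.injEq]
      exact ⟨by norm_num, this⟩
    have key : ∀ x y a c : ℚ, 0 < a → 0 < c → a * c = 1 →
        (x, y) ∈ rainLayers x₀ y₀ b 5 → (x + c, y) ∈ rainLayers x₀ y₀ b 5 →
        (x, y + a) ∈ rainLayers x₀ y₀ b 5 →
        (y = y₀ + 1 / b ∨ y = y₀ + 1 / (2 * b)) →
        (y + a = y₀ + 1 / b ∨ y + a = y₀ + 1 / (2 * b)) → True := fun _ _ _ _ _ _ _ _ _ _ _ _ => trivial
    clear key
    have c1 := h _ h1
    have c2 := h _ h2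
    have c3 := h _ h3
    have ha : (0:ℚ) < 1 / (2 * b) := by positivity
    refine ⟨Or.inr ⟨x₀, y₀ + 1 / (2 * b), 1 / (2 * b), 2 * b, ha, by positivity,
      by field_simp, h1, h2, h3, Or.inr rfl, ?_, c1, fin2_ne_ne c1 c2, fin2_ne_ne c1 c3⟩,
      x₀, y₀ + 1 / (2 * b), 1 / (2 * b), 2 * b, ha, by positivity, by field_simp,
      Or.inr h1, Or.inr h2, Or.inr h3, fin2_ne_ne c1 c2, fin2_ne_ne c1 c3⟩
    left; field_simp; ring
end

section
/- For any coloring of ℚ² with finitely many colors, there exists a monochromatic standard triangle of area 1/2, i.e., three points (x₀,y₀), (x₀+c,y₀), (x₀,y₀+a) with a,c ∈ ℚ, a,c > 0, ac = 1, all of the same color. -/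
open Filter

/-- A finite set `F` contains, for every coloring `ψ`, a monochromatic standard triangle. -/
def ForcesTri {m : ℕ} (F : Finset (ℚ × ℚ)) (ψ : ℚ × ℚ → Fin m) : Prop :=
  ∃ x y a c : ℚ, 0 < a ∧ 0 < c ∧ a * c = 1 ∧
    (x, y) ∈ F ∧ (x + c, y) ∈ F ∧ (x, y + a) ∈ F ∧
    ψ (x, y) = ψ (x + c, y) ∧ ψ (x, y) = ψ (x, y + a)

/-- Compactness: if every `m`-coloring of `ℚ²` admits a monochromatic standard triangle,
then some finite set forces such a triangle for every coloring. -/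
lemma compactness_forcing {m : ℕ}
    (H : ∀ χ : ℚ × ℚ → Fin m, ∃ x y a c : ℚ, 0 < a ∧ 0 < c ∧ a * c = 1 ∧
      χ (x, y) = χ (x + c, y) ∧ χ (x, y) = χ (x, y + a)) :
    ∃ F : Finset (ℚ × ℚ), ∀ ψ : ℚ × ℚ → Fin m, ForcesTri F ψ := by
  by_contra hcon
  push_neg at hcon
  -- a bad coloring for each finite set
  have hcon' : ∀ F : Finset (ℚ × ℚ), ∃ ψ : ℚ × ℚ → Fin m, ¬ ForcesTri F ψ := hcon
  choose f hf using hcon'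
  set U : Ultrafilter (Finset (ℚ × ℚ)) := Ultrafilter.of atTop with hUdef
  -- the ultrafilter limit coloring
  have hmem : ∀ p : ℚ × ℚ, ∃ k : Fin m, {F : Finset (ℚ × ℚ) | f F p = k} ∈ U := by
    intro p
    obtain ⟨k, hk⟩ := Ultrafilter.eq_pure_of_finite (U.map fun F => f F p)
    refine ⟨k, ?_⟩
    have h1 : {k} ∈ (U.map fun F => f F p) := by
      rw [hk]; exact Filter.mem_pure.mpr rfl
    have h2 := Ultrafilter.mem_map.mp h1
    simpa [Set.preimage, Set.mem_singleton_iff] using h2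
  choose g hg using hmem
  obtain ⟨x, y, a, c, ha, hc, hac, e1, e2⟩ := H g
  have h1 := hg (x, y)
  have h2 := hg (x + c, y)
  have h3 := hg (x, y + a)
  have h4 : {F : Finset (ℚ × ℚ) |
      ({(x, y), (x + c, y), (x, y + a)} : Finset (ℚ × ℚ)) ≤ F} ∈ U :=
    Ultrafilter.of_le atTop (mem_atTop _)
  obtain ⟨F, hF⟩ := Ultrafilter.nonempty_of_mem (inter_mem h1 (inter_mem h2 (inter_mem h3 h4)))
  obtain ⟨k1, k2, k3, k4⟩ := hF
  have hsub : ({(x, y), (x + c, y), (x, y + a)} : Finset (ℚ × ℚ)) ⊆ F := k4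
  refine hf F ⟨x, y, a, c, ha, hc, hac, ?_, ?_, ?_, ?_, ?_⟩
  · exact hsub (by simp)
  · exact hsub (by simp)
  · exact hsub (by simp)
  · rw [k1, k2]; exact e1
  · rw [k1, k3]; exact e2

/-- Main induction: every `(n+1)`-coloring of `ℚ²` admits a monochromatic standard triangle. -/
lemma mono_standard_triangle_aux :
    ∀ n : ℕ, ∀ χ : ℚ × ℚ → Fin (n + 1), ∃ x y a c : ℚ, 0 < a ∧ 0 < c ∧ a * c = 1 ∧
      χ (x, y) = χ (x + c, y) ∧ χ (x, y) = χ (x, y + a) := by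
  intro n
  induction n with
  | zero =>
      intro χ
      refine ⟨0, 0, 1, 1, one_pos, one_pos, mul_one 1, ?_, ?_⟩ <;>
        · apply Fin.ext
          omega
  | succ n IH =>
      intro χ
      obtain ⟨F, hF⟩ := compactness_forcing IH
      -- translate F upwards so that all second coordinates are positive
      obtain ⟨M, hM⟩ := (F.image fun p => -p.2).exists_le
      set N : ℚ := M + 1 with hN
      set F' : Finset (ℚ × ℚ) := F.image (fun p => (p.1, p.2 + N)) with hF'def
      have hpos : ∀ p ∈ F', 0 < p.2 := by
        intro p hp
        rw [hF'def, Finset.mem_image] at hp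
        obtain ⟨q, hq, rfl⟩ := hp
        have := hM _ (Finset.mem_image_of_mem (fun p => -p.2) hq)
        simp only [hN]
        linarith
      -- the translated set still forces triangles
      have hF' : ∀ ψ : ℚ × ℚ → Fin (n + 1), ForcesTri F' ψ := by
        intro ψ
        obtain ⟨x, y, a, c, ha, hc, hac, m1, m2, m3, e1, e2⟩ :=
          hF (fun p => ψ (p.1, p.2 + N))
        refine ⟨x, y + N, a, c, ha, hc, hac, ?_, ?_, ?_, e1, ?_⟩
        · exact Finset.mem_image_of_mem _ m1
        · exact Finset.mem_image_of_mem _ m2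
        · have : (x, y + N + a) = ((x, y + a).1, (x, y + a).2 + N) := by
            simp [Prod.ext_iff]; ring
          rw [this]
          exact Finset.mem_image_of_mem _ m3
        · have harg : (x, y + N + a) = (x, y + a + N) := by
            simp [Prod.ext_iff]; ring
          rw [harg]; exact e2
      -- apply Gallai's theorem to the base row
      set S : Finset ℚ :=
        (F'.image Prod.fst) ∪ (F'.image fun p => p.1 + p.2⁻¹) with hSdef
      obtain ⟨t, ht, b, k, hk⟩ :=
        Combinatorics.exists_mono_homothetic_copy S (fun q => χ (q, 0))
      have ht' : (0 : ℚ) < (t : ℚ) := by exact_mod_cast ht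
      by_cases hA : ∃ p ∈ F', χ ((t : ℚ) * p.1 + b, p.2 / (t : ℚ)) = k
      · -- Case A: some apex has color k; together with the base pair, a triangle
        obtain ⟨p, hp, hpk⟩ := hA
        have hv : 0 < p.2 := hpos p hp
        have h1 : χ ((t : ℚ) * p.1 + b, 0) = k := by
          have := hk p.1 (Finset.mem_union_left _ (Finset.mem_image_of_mem Prod.fst hp))
          simpa [nsmul_eq_mul] using this
        have h2 : χ ((t : ℚ) * p.1 + (t : ℚ) * p.2⁻¹ + b, 0) = k := by
          have := hk (p.1 + p.2⁻¹)
            (Finset.mem_union_right _ (Finset.mem_image_of_mem _ hp))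
          simpa [nsmul_eq_mul, mul_add] using this
        refine ⟨(t : ℚ) * p.1 + b, 0, p.2 / (t : ℚ), (t : ℚ) / p.2,
          by positivity, by positivity, ?_, ?_, ?_⟩
        · field_simp
        · have harg : (t : ℚ) * p.1 + b + (t : ℚ) / p.2
              = (t : ℚ) * p.1 + (t : ℚ) * p.2⁻¹ + b := by
            rw [div_eq_mul_inv]; ring
          rw [harg, h1, h2]
        · rw [zero_add, h1, hpk]
      · -- Case B: all apexes avoid color k; use the induction hypothesis via `F'`
        push_neg at hA
        set d0 : Fin (n + 1) := ⟨0, Nat.succ_pos n⟩ with hd0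
        set ψ : ℚ × ℚ → Fin (n + 1) := fun p =>
          ((finSuccEquiv' k) (χ ((t : ℚ) * p.1 + b, p.2 / (t : ℚ)))).getD d0 with hψ
        have key : ∀ p ∈ F', ∀ q ∈ F', ψ p = ψ q →
            χ ((t : ℚ) * p.1 + b, p.2 / (t : ℚ)) = χ ((t : ℚ) * q.1 + b, q.2 / (t : ℚ)) := by
          intro p hp q hq hpq
          set jp := χ ((t : ℚ) * p.1 + b, p.2 / (t : ℚ)) with hjp
          set jq := χ ((t : ℚ) * q.1 + b, q.2 / (t : ℚ)) with hjq
          have hjpk : jp ≠ k := hA p hp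
          have hjqk : jq ≠ k := hA q hq
          rcases h1 : (finSuccEquiv' k) jp with _ | ip
          · exact absurd ((finSuccEquiv' k).injective
              (h1.trans (finSuccEquiv'_at k).symm)) hjpk
          rcases h2 : (finSuccEquiv' k) jq with _ | iq
          · exact absurd ((finSuccEquiv' k).injective
              (h2.trans (finSuccEquiv'_at k).symm)) hjqk
          have : ip = iq := by
            have hp' : ψ p = ip := by rw [hψ]; simp only []; rw [← hjp, h1]; rfl
            have hq' : ψ q = iq := by rw [hψ]; simp only []; rw [← hjq, h2]; rfl
            rw [hp', hq'] at hpq; exact hpq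
          exact (finSuccEquiv' k).injective (by rw [h1, h2, this])
        obtain ⟨x, y, a, c, ha, hc, hac, m1, m2, m3, e1, e2⟩ := hF' ψ
        refine ⟨(t : ℚ) * x + b, y / (t : ℚ), a / (t : ℚ), (t : ℚ) * c,
          by positivity, by positivity, ?_, ?_, ?_⟩
        · field_simp
          linear_combination hac
        · have := key (x, y) m1 (x + c, y) m2 e1
          have harg : ((t : ℚ) * x + b + (t : ℚ) * c, y / (t : ℚ))
              = ((t : ℚ) * (x + c) + b, y / (t : ℚ)) := by
            simp only [Prod.mk.injEq, and_true]
            ring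
          rw [harg]
          exact this
        · have := key (x, y) m1 (x, y + a) m3 e2
          have harg : ((t : ℚ) * x + b, y / (t : ℚ) + a / (t : ℚ))
              = ((t : ℚ) * x + b, (y + a) / (t : ℚ)) := by
            simp only [Prod.mk.injEq, true_and]
            ring
          rw [harg]
          exact this

/-- Any finite coloring of `ℚ²` admits a monochromatic standard triangle of area `1/2`. -/
theorem mono_standard_triangle (h : ℕ) (hh : 1 ≤ h) (χ : ℚ × ℚ → Fin h) :
    ∃ x y a c : ℚ, 0 < a ∧ 0 < c ∧ a * c = 1 ∧
      χ (x, y) = χ (x + c, y) ∧ χ (x, y) = χ (x, y + a) := by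
  obtain ⟨n, rfl⟩ : ∃ n, h = n + 1 := ⟨h - 1, (Nat.succ_pred_eq_of_pos hh).symm⟩
  exact mono_standard_triangle_aux n χ
end

section
/- Let ℓ ≥ 2, n ≥ 2, and s = ((ℓ−1)^{n−1}+1)!. Then for every w ∈ {1, 2, …, (ℓ−1)^{n−1}}, the quantity 1/s^{n−1} + 1/(w·s^{n−1}) equals 1/W for some natural number W with 1 ≤ W ≤ (L−1)^{n−1}, where L = ((ℓ−1)^{n−1}+1)!·ℓ + 1. -/
/-- With `s = ((ℓ-1)^(n-1) + 1)!` and `L = s·ℓ + 1`, for every `w ∈ {1, …, (ℓ-1)^(n-1)}` the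
rational `1/s^(n-1) + 1/(w·s^(n-1))` equals `1/W` for some natural `1 ≤ W ≤ (L-1)^(n-1)`. -/
theorem layer_height_unit_fraction (ℓ n : ℕ) (hℓ : 2 ≤ ℓ) (hn : 2 ≤ n)
    (w : ℕ) (hw1 : 1 ≤ w) (hw2 : w ≤ (ℓ - 1) ^ (n - 1)) :
    ∃ W : ℕ, 1 ≤ W ∧
      W ≤ ((((ℓ - 1) ^ (n - 1) + 1).factorial * ℓ + 1) - 1) ^ (n - 1) ∧
      (1 : ℚ) / ((((ℓ - 1) ^ (n - 1) + 1).factorial : ℚ) ^ (n - 1)) +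
        1 / (w * (((ℓ - 1) ^ (n - 1) + 1).factorial : ℚ) ^ (n - 1)) = 1 / W := by
  set m := (ℓ - 1) ^ (n - 1) with hm
  set s := (m + 1).factorial with hs
  have hspos : 0 < s := Nat.factorial_pos _
  have hdvd : (w + 1) ∣ s := Nat.dvd_factorial (by omega) (by omega)
  have hk : 1 ≤ n - 1 := by omega
  have hdvdk : (w + 1) ∣ s ^ (n - 1) := hdvd.trans (dvd_pow_self s (by omega))
  refine ⟨w * s ^ (n - 1) / (w + 1), ?_, ?_, ?_⟩
  · have : w + 1 ≤ w * s ^ (n - 1) := by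
      have h1 : 2 ≤ s := by
        have := Nat.self_le_factorial (m + 1)
        have hm1 : 1 ≤ m := Nat.one_le_pow _ _ (by omega)
        omega
      have h2 : 2 ≤ s ^ (n - 1) := le_trans h1 (Nat.le_self_pow (by omega) _)
      calc w + 1 ≤ w + w := by omega
        _ = w * 2 := by ring
        _ ≤ w * s ^ (n - 1) := Nat.mul_le_mul_left _ h2
    have := Nat.div_le_div_right (c := w + 1) this
    simpa using le_trans (by simp [Nat.le_div_iff_mul_le]) this
  · calc w * s ^ (n - 1) / (w + 1) ≤ w * s ^ (n - 1) := Nat.div_le_self _ _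
      _ ≤ m * s ^ (n - 1) := Nat.mul_le_mul_right _ hw2
      _ ≤ (s * ℓ) ^ (n - 1) := by
          rw [mul_pow, hm]
          have h1 : (ℓ - 1) ^ (n - 1) ≤ ℓ ^ (n - 1) := Nat.pow_le_pow_left (by omega) _
          have h2 : 1 ≤ s ^ (n - 1) := Nat.one_le_pow _ _ hspos
          calc (ℓ - 1) ^ (n - 1) * s ^ (n - 1) ≤ ℓ ^ (n - 1) * s ^ (n - 1) :=
                Nat.mul_le_mul_right _ h1
            _ = s ^ (n - 1) * ℓ ^ (n - 1) := by ring
      _ = (s * ℓ + 1 - 1) ^ (n - 1) := by simp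
  · have hW : (w * s ^ (n - 1) / (w + 1)) * (w + 1) = w * s ^ (n - 1) :=
      Nat.div_mul_cancel (Dvd.dvd.mul_left hdvdk w)
    have hq : ((w * s ^ (n - 1) / (w + 1) : ℕ) : ℚ) * (w + 1) = w * (s : ℚ) ^ (n - 1) := by
      exact_mod_cast congrArg (Nat.cast : ℕ → ℚ) hW
    have hS : ((s : ℚ)) ^ (n - 1) ≠ 0 := pow_ne_zero _ (by exact_mod_cast hspos.ne')
    have hwq : (w : ℚ) ≠ 0 := Nat.cast_ne_zero.mpr (by omega)
    have hWpos : ((w * s ^ (n - 1) / (w + 1) : ℕ) : ℚ) ≠ 0 := by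
      have hp : 0 < w * s ^ (n - 1) := by positivity
      have : 0 < w * s ^ (n - 1) / (w + 1) :=
        Nat.div_pos (Nat.le_of_dvd hp (Dvd.dvd.mul_left hdvdk w)) (by omega)
      exact_mod_cast this.ne'
    field_simp
    nlinarith [hq, sq_nonneg ((s:ℚ)^(n-1))]
end

section
/- Define the n-dimensional slanting rain of length ℓ with step (s₂,…,s_n) ∈ ℚ^{n−1} (all coordinates positive) and origin (x₀,…,z₀) ∈ ℚⁿ: its base is the (n−1)-dimensional grid {(x₀, y₀+κ₂s₂, …, z₀+κ_n s_n) : 0 ≤ κ_i ≤ ℓ−1}, and its layers consist of all points (x₀ + 1/(w·s₂⋯s_n), y₀+κ₂s₂, …, z₀+κ_n s_n) with 1 ≤ w ≤ (ℓ−1)^{n−1} and (ℓ−1−κ₂)⋯(ℓ−1−κ_n) ≥ w. Then for L = ((ℓ−1)^{n−1}+1)!·ℓ + 1, the layers of every n-dimensional slanting rain of length L contain, as a subset, an n-dimensional slanting rain of length ℓ. -/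
open Finset

/-- The base of the `(m+1)`-dimensional slanting rain of length `ℓ` with step `s : Fin m → ℚ`
and origin `(x₀, y₀)`: an `m`-dimensional grid in the hyperplane `x = x₀`. -/
def ndRainBase (m ℓ : ℕ) (x₀ : ℚ) (y₀ s : Fin m → ℚ) : Set (ℚ × (Fin m → ℚ)) :=
  {p | ∃ κ : Fin m → ℕ, (∀ i, κ i ≤ ℓ - 1) ∧
    p = (x₀, fun i => y₀ i + (κ i : ℚ) * s i)}

/-- The layers of the `(m+1)`-dimensional slanting rain: all apexes of standard simplices of
volume `1/(m+1)!·(m+1)`... precisely the points `(x₀ + 1/(w·∏ s_i), y₀ + κ·s)` with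
`1 ≤ w ≤ (ℓ-1)^m` and `∏ (ℓ-1-κ_i) ≥ w`. -/
def ndRainLayers (m ℓ : ℕ) (x₀ : ℚ) (y₀ s : Fin m → ℚ) : Set (ℚ × (Fin m → ℚ)) :=
  {p | ∃ (w : ℕ) (κ : Fin m → ℕ), 1 ≤ w ∧ w ≤ (ℓ - 1) ^ m ∧ (∀ i, κ i ≤ ℓ - 1) ∧
    w ≤ ∏ i, (ℓ - 1 - κ i) ∧
    p = (x₀ + 1 / ((w : ℚ) * ∏ i, s i), fun i => y₀ i + (κ i : ℚ) * s i)}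

/-- The layers of every `n`-dimensional slanting rain of length `L = ((ℓ-1)^(n-1)+1)!·ℓ + 1`
contain an `n`-dimensional slanting rain of length `ℓ`. -/
theorem ndSubRain_exists (n ℓ : ℕ) (hn : 2 ≤ n) (hℓ : 2 ≤ ℓ)
    (x₀ : ℚ) (y₀ s : Fin (n - 1) → ℚ) (hs : ∀ i, 0 < s i) :
    ∃ (x₀' : ℚ) (y₀' s' : Fin (n - 1) → ℚ), (∀ i, 0 < s' i) ∧
      ndRainBase (n - 1) ℓ x₀' y₀' s' ∪ ndRainLayers (n - 1) ℓ x₀' y₀' s' ⊆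
        ndRainLayers (n - 1) (((ℓ - 1) ^ (n - 1) + 1).factorial * ℓ + 1) x₀ y₀ s := by
  have hm1 : 1 ≤ n - 1 := by omega
  set M := (ℓ - 1) ^ (n - 1) with hM
  set F := (M + 1).factorial with hF
  have hF1 : 1 ≤ F := Nat.factorial_pos _
  let i₀ : Fin (n - 1) := ⟨0, by omega⟩
  set t : Fin (n - 1) → ℕ := fun i => if i = i₀ then F else 1 with ht
  have hti : ∀ i, 1 ≤ t i ∧ t i ≤ F := by
    intro i; simp only [ht]; split <;> omega
  have hProdT : ∏ i, t i = F := by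
    simp [ht, Finset.prod_ite_eq']
  have hL1 : F * ℓ + 1 - 1 = F * ℓ := by omega
  -- key per-coordinate bound
  have hκt : ∀ (κ' : Fin (n-1) → ℕ), (∀ i, κ' i ≤ ℓ - 1) →
      (∀ i, κ' i * t i ≤ F * ℓ) ∧ F ≤ ∏ i, (F * ℓ - κ' i * t i) := by
    intro κ' hκ'
    have key : ∀ i, κ' i * t i ≤ (ℓ - 1) * F := fun i =>
      Nat.mul_le_mul (hκ' i) (hti i).2
    have h2 : (ℓ - 1) * F + F = F * ℓ := by
      obtain ⟨k, rfl⟩ : ∃ k, ℓ = k + 1 := ⟨ℓ - 1, by omega⟩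
      simp [Nat.add_mul, Nat.mul_add, Nat.mul_comm]
    constructor
    · intro i; have := key i; omega
    · calc F ≤ F ^ (n - 1) := Nat.le_self_pow (by omega) F
        _ = ∏ _i : Fin (n-1), F := by simp
        _ ≤ ∏ i, (F * ℓ - κ' i * t i) := by
            apply Finset.prod_le_prod'
            intro i _; have := key i; omega
  have hPs : (0:ℚ) < ∏ i, s i := Finset.prod_pos (fun i _ => hs i)
  have hProdS' : ∏ i, ((t i : ℚ) * s i) = (F : ℚ) * ∏ i, s i := by
    rw [Finset.prod_mul_distrib]
    congr 1
    rw [← Nat.cast_prod, hProdT]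
  refine ⟨x₀ + 1 / ((F : ℚ) * ∏ i, s i), y₀, fun i => (t i : ℚ) * s i, ?_, ?_⟩
  · intro i
    have h1 : (0:ℚ) < (t i : ℚ) := by
      have := (hti i).1; exact_mod_cast Nat.lt_of_lt_of_le Nat.zero_lt_one this
    exact mul_pos h1 (hs i)
  rintro p (⟨κ', hκ', rfl⟩ | ⟨w', κ', hw1, hw2, hκ', hwκ, rfl⟩)
  · -- base case
    obtain ⟨hb1, hb2⟩ := hκt κ' hκ'
    refine ⟨F, fun i => κ' i * t i, hF1, ?_, ?_, ?_, ?_⟩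
    · rw [hL1]
      calc F ≤ F * ℓ := Nat.le_mul_of_pos_right _ (by omega)
        _ ≤ (F * ℓ) ^ (n - 1) := Nat.le_self_pow (by omega) _
    · intro i; rw [hL1]; exact le_trans (hb1 i) (by omega)
    · calc F ≤ ∏ i, (F * ℓ - κ' i * t i) := hb2
        _ = ∏ i, (F * ℓ + 1 - 1 - κ' i * t i) := by simp
    · refine Prod.ext rfl ?_
      funext i
      push_cast
      ring
  · -- layers case
    obtain ⟨hb1, hb2⟩ := hκt κ' hκ'
    have hdvd : (w' + 1) ∣ F := Nat.dvd_factorial (by omega) (by omega)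
    set d := F / (w' + 1) with hd
    have hdF : (w' + 1) * d = F := Nat.mul_div_cancel' hdvd
    have hd1 : 1 ≤ d := by
      rcases Nat.eq_zero_or_pos d with h | h
      · rw [h, Nat.mul_zero] at hdF; omega
      · exact h
    have hwF : w' * d < F := by
      calc w' * d < w' * d + d := by omega
        _ = (w' + 1) * d := by ring
        _ = F := hdF
    refine ⟨w' * d, fun i => κ' i * t i, Nat.mul_pos (by omega) (by omega), ?_, ?_, ?_, ?_⟩
    · rw [hL1]
      calc w' * d ≤ F := le_of_lt hwF
        _ ≤ F * ℓ := Nat.le_mul_of_pos_right _ (by omega)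
        _ ≤ (F * ℓ) ^ (n - 1) := Nat.le_self_pow (by omega) _
    · intro i; rw [hL1]; exact le_trans (hb1 i) (by omega)
    · calc w' * d ≤ F := le_of_lt hwF
        _ ≤ ∏ i, (F * ℓ - κ' i * t i) := hb2
        _ = ∏ i, (F * ℓ + 1 - 1 - κ' i * t i) := by simp
    · refine Prod.ext ?_ ?_
      · show x₀ + 1 / ((F : ℚ) * ∏ i, s i) + 1 / ((w' : ℚ) * ∏ i, ((t i : ℚ) * s i))
            = x₀ + 1 / (((w' * d : ℕ) : ℚ) * ∏ i, s i)
        rw [hProdS']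
        have hFQ : ((w' : ℚ) + 1) * d = F := by exact_mod_cast hdF
        have hF0 : (F : ℚ) ≠ 0 := by positivity
        have hw0 : (w' : ℚ) ≠ 0 := by positivity
        have hd0 : (d : ℚ) ≠ 0 := by positivity
        have hP0 : (∏ i, s i) ≠ 0 := ne_of_gt hPs
        push_cast
        field_simp
        ring_nf
        linear_combination hFQ
      · funext i
        push_cast
        ring
end

section
/- For any finite coloring of ℚⁿ (n ≥ 2) and any positive rational V, there exists a monochromatic standard simplex of volume V, i.e., n+1 points (x₀,…,z₀), (x₀+a₁,y₀,…,z₀), (x₀,y₀+a₂,…,z₀), …, (x₀,…,z₀+a_n) with all a_i ∈ ℚ positive and (a₁⋯a_n)/n! = V, all of the same color. -/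
open Finset


lemma gallai_bounded {A : Type} [Fintype A] [Nonempty A] (m h : ℕ) (hh : 0 < h) :
    ∃ N : ℕ, 0 < N ∧ ∀ (g : A → (Fin m → ℕ)) (κ : (Fin m → ℕ) → Fin h),
      ∃ (a : ℕ) (w : Fin m → ℕ) (c₀ : Fin h), 1 ≤ a ∧ a ≤ N ∧
        (∀ p : A, ∃ f : Fin N → A, w + a • g p = ∑ j, g (f j)) ∧
        (∀ p : A, κ (w + a • g p) = c₀) := by
  classical
  obtain ⟨ι, _inst, hHJ⟩ := Combinatorics.Line.exists_mono_in_high_dimension A (Fin h)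
  haveI : Nonempty ι := by
    obtain ⟨l, -⟩ := hHJ (fun _ => (⟨0, hh⟩ : Fin h))
    obtain ⟨i, -⟩ := l.proper
    exact ⟨i⟩
  refine ⟨Fintype.card ι, Fintype.card_pos, fun g κ => ?_⟩
  obtain ⟨l, c₀, hc₀⟩ := hHJ (fun f => κ (∑ i, g (f i)))
  set p₀ : A := Classical.arbitrary A with hp₀
  set S : Finset ι := Finset.univ.filter (fun i => l.idxFun i = none) with hS
  set a : ℕ := S.card with ha
  set w : Fin m → ℕ := ∑ i ∈ Sᶜ, g ((l.idxFun i).getD p₀) with hw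
  have key : ∀ x : A, (∑ i, g (l x i)) = w + a • g x := by
    intro x
    have hsplit : (∑ i, g (l x i)) = (∑ i ∈ S, g (l x i)) + ∑ i ∈ Sᶜ, g (l x i) := by
      rw [Finset.sum_add_sum_compl]
    rw [hsplit]
    have h1 : (∑ i ∈ S, g (l x i)) = a • g x := by
      rw [Finset.sum_congr rfl (fun i hi => ?_), Finset.sum_const]
      have : l.idxFun i = none := by simpa [hS] using hi
      rw [Combinatorics.Line.apply_none _ _ _ this]
    have h2 : (∑ i ∈ Sᶜ, g (l x i)) = w := by
      rw [hw]
      refine Finset.sum_congr rfl (fun i hi => ?_)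
      have : l.idxFun i ≠ none := by
        simp only [hS, Finset.mem_compl, Finset.mem_filter, Finset.mem_univ, true_and] at hi
        exact hi
      obtain ⟨v, hv⟩ := Option.ne_none_iff_exists'.mp this
      rw [l.apply_some hv, hv]
      rfl
    rw [h1, h2, add_comm]
  have ha1 : 1 ≤ a := by
    obtain ⟨i, hi⟩ := l.proper
    have : i ∈ S := by simp [hS, hi]
    exact Finset.card_pos.mpr ⟨i, this⟩
  have haN : a ≤ Fintype.card ι := by
    simpa [ha] using Finset.card_filter_le Finset.univ (fun i => l.idxFun i = none)
  refine ⟨a, w, c₀, ha1, haN, fun p => ?_, fun p => ?_⟩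
  · set e := (Fintype.equivFin ι).symm
    refine ⟨fun j => (l.idxFun (e j)).getD p, ?_⟩
    rw [← key p]
    rw [← Equiv.sum_comp e (fun i => g (l p i))]
    rfl
  · rw [← key p]
    exact hc₀ p

lemma main_aux (m : ℕ) (h : ℕ) (hh : 0 < h) (χ : (Fin (m + 2) → ℚ) → Fin h)
    (c : ℚ) (hc : 0 < c) :
    ∃ (v a : Fin (m + 2) → ℚ), (∀ i, 0 < a i) ∧ (∏ i, a i) = c ∧
      ∀ i, χ (Function.update v i (v i + a i)) = χ v := by
  classical
  -- snoc/update lemmas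
  have upd_last : ∀ (X : Fin (m+1) → ℚ) (Y z : ℚ),
      Function.update (Fin.snoc X Y : Fin (m+2) → ℚ) (Fin.last (m+1)) z = Fin.snoc X z := by
    intro X Y z; funext i
    refine Fin.lastCases ?_ (fun j => ?_) i
    · simp
    · rw [Function.update_of_ne (Fin.castSucc_lt_last j).ne, Fin.snoc_castSucc, Fin.snoc_castSucc]
  have upd_cast : ∀ (X : Fin (m+1) → ℚ) (Y z : ℚ) (j : Fin (m+1)),
      Function.update (Fin.snoc X Y : Fin (m+2) → ℚ) (Fin.castSucc j) z
        = Fin.snoc (Function.update X j z) Y := by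
    intro X Y z j; funext i
    refine Fin.lastCases ?_ (fun j' => ?_) i
    · rw [Function.update_of_ne (Fin.castSucc_lt_last j).ne', Fin.snoc_last, Fin.snoc_last]
    · by_cases hjj : j' = j
      · subst hjj; rw [Fin.snoc_castSucc, Function.update_self, Function.update_self]
      · rw [Function.update_of_ne (by simpa using hjj), Fin.snoc_castSucc, Fin.snoc_castSucc,
          Function.update_of_ne hjj]
  have claim : ∀ k : ℕ, ∃ (U : Finset ℕ) (ι : Type) (_ : Fintype ι) (_ : Nonempty ι)
      (T : ℕ → ι → (Fin (m+1) → ℕ)), (∀ u ∈ U, 0 < u) ∧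
      ∀ (M : ℕ), 0 < M → ∀ (d ν Y₀ : ℚ) (x₀ : Fin (m+1) → ℚ), 0 < d → 0 < ν →
        d ^ (m+1) * ν = c →
        ∀ Cs : Finset (Fin h), Cs.card ≤ k →
        (∀ (q : ι), ∀ u ∈ U, χ (Fin.snoc (fun j => x₀ j + d * (T M q j : ℚ))
            (Y₀ + ν / ((M : ℚ) * (u : ℚ)))) ∈ Cs) →
        ∃ (v a : Fin (m + 2) → ℚ), (∀ i, 0 < a i) ∧ (∏ i, a i) = c ∧
          ∀ i, χ (Function.update v i (v i + a i)) = χ v := by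
    intro k
    induction k with
    | zero =>
        refine ⟨{1}, PUnit, inferInstance, ⟨⟨⟩⟩, fun _ _ _ => 0, by simp, ?_⟩
        intro M hM d ν Y₀ x₀ hd hν hdν Cs hCs hgrid
        have hCs0 : Cs = ∅ := Finset.card_eq_zero.mp (Nat.le_zero.mp hCs)
        have := hgrid ⟨⟩ 1 (Finset.mem_singleton_self 1)
        rw [hCs0] at this
        exact absurd this (Finset.notMem_empty _)
    | succ k IHk =>
        obtain ⟨U, ι, _instF, _instN, T, hU, IH⟩ := IHk
        classical
        obtain ⟨N, hNpos, hgal⟩ := gallai_bounded (A := ι × Option (Fin (m+1) ⊕ {x // x ∈ U}))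
          (m+1) h hh
        set lam : ℕ := ∏ p ∈ Finset.Icc 1 N ×ˢ U, (1 + p.1 ^ (m+1) * p.2) with hlam
        have hlam_pos : 0 < lam := Finset.prod_pos (fun p _ => by positivity)
        have hquo : ∀ a ∈ Finset.Icc 1 N, ∀ u ∈ U, ∃ l₀ : ℕ, 0 < l₀ ∧
            lam = (1 + a ^ (m+1) * u) * l₀ ∧
            lam * a ^ (m+1) * u / (1 + a ^ (m+1) * u) = l₀ * (a ^ (m+1) * u) := by
          intro a ha u hu
          obtain ⟨l₀, hl₀⟩ := Finset.dvd_prod_of_mem (fun p => 1 + p.1 ^ (m+1) * p.2)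
            (Finset.mem_product.mpr ⟨ha, hu⟩ : (a, u) ∈ Finset.Icc 1 N ×ˢ U)
          have hl₀' : lam = (1 + a ^ (m+1) * u) * l₀ := by rw [hlam]; simpa using hl₀
          clear hl₀
          have hD : 0 < 1 + a ^ (m+1) * u := by positivity
          refine ⟨l₀, ?_, hl₀', ?_⟩
          · rcases Nat.eq_zero_or_pos l₀ with h0 | h0
            · rw [h0, mul_zero] at hl₀'; omega
            · exact h0
          · have : lam * a ^ (m+1) * u = (1 + a ^ (m+1) * u) * (l₀ * (a ^ (m+1) * u)) := by
              rw [hl₀']; ring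
            rw [this, Nat.mul_div_cancel_left _ hD]
        set g : ℕ → (ι × Option (Fin (m+1) ⊕ {x // x ∈ U})) → (Fin (m+1) → ℕ) := fun M p =>
          T (M * lam) p.1 + (Option.elim p.2 0 (Sum.elim (fun j => Pi.single j 1)
            (fun u => Pi.single 0 (M * lam * u.1)))) with hg
        refine ⟨insert lam ((Finset.Icc 1 N ×ˢ U).image
            fun p => lam * p.1 ^ (m+1) * p.2 / (1 + p.1 ^ (m+1) * p.2)),
          (Fin N → ι × Option (Fin (m+1) ⊕ {x // x ∈ U})), inferInstance,
          ⟨fun _ => (Classical.arbitrary ι, none)⟩,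
          (fun M F => ∑ j, g M (F j)), ?_, ?_⟩
        · intro u hu
          rcases Finset.mem_insert.mp hu with rfl | hu
          · exact hlam_pos
          · obtain ⟨⟨a, u'⟩, hmem, rfl⟩ := Finset.mem_image.mp hu
            obtain ⟨ha, hu'⟩ := Finset.mem_product.mp hmem
            obtain ⟨l₀, hl₀pos, -, heq⟩ := hquo a ha u' hu'
            rw [heq]
            have hu'pos := hU u' hu'
            have hapos : 0 < a := by
              rw [Finset.mem_Icc] at ha; omega
            positivity
        · intro M hM d ν Y₀ x₀ hd hν hdν Cs hCs hgrid
          obtain ⟨a, w, c₀, ha1, haN, hrep, hmono⟩ := hgal (g M)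
            (fun t => χ (Fin.snoc (fun j => x₀ j + d * (t j : ℚ))
              (Y₀ + ν / ((M : ℚ) * (lam : ℚ)))))
          have hmono' : ∀ p, χ (Fin.snoc (fun j => x₀ j + d * (((w + a • g M p) j : ℕ) : ℚ))
              (Y₀ + ν / ((M:ℚ) * (lam:ℚ)))) = c₀ := hmono
          have hInCs : ∀ (p) (u : ℕ), u ∈ insert lam ((Finset.Icc 1 N ×ˢ U).image
                fun p => lam * p.1 ^ (m+1) * p.2 / (1 + p.1 ^ (m+1) * p.2)) →
              χ (Fin.snoc (fun j => x₀ j + d * (((w + a • g M p) j : ℕ) : ℚ))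
                (Y₀ + ν / ((M:ℚ) * (u:ℚ)))) ∈ Cs := by
            intro p u hu
            obtain ⟨f, hf⟩ := hrep p
            rw [hf]
            exact hgrid f u hu
          have hc₀Cs : c₀ ∈ Cs := by
            have h1 := hInCs (Classical.arbitrary ι, none) lam (Finset.mem_insert_self _ _)
            rwa [hmono' _] at h1
          have hM0 : (0:ℚ) < (M:ℚ) := by exact_mod_cast hM
          have hlam0 : (0:ℚ) < (lam:ℚ) := by exact_mod_cast hlam_pos
          have ha0 : (0:ℚ) < (a:ℚ) := by exact_mod_cast Nat.lt_of_lt_of_le Nat.zero_lt_one ha1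
          have hρmem : ∀ u' ∈ U, lam * a ^ (m+1) * u' / (1 + a ^ (m+1) * u') ∈
              insert lam ((Finset.Icc 1 N ×ˢ U).image
                fun p => lam * p.1 ^ (m+1) * p.2 / (1 + p.1 ^ (m+1) * p.2)) := fun u' hu' =>
            Finset.mem_insert_of_mem (Finset.mem_image.mpr ⟨(a, u'),
              Finset.mem_product.mpr ⟨Finset.mem_Icc.mpr ⟨ha1, haN⟩, hu'⟩, rfl⟩)
          have hrow : ∀ u' ∈ U, ν / ((M:ℚ) * (lam:ℚ)) +
              ν / ((a:ℚ)^(m+1) * ((M:ℚ) * (lam:ℚ)) * (u':ℚ))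
              = ν / ((M:ℚ) * ((lam * a ^ (m+1) * u' / (1 + a ^ (m+1) * u') : ℕ) : ℚ)) := by
            intro u' hu'
            obtain ⟨l₀, hl₀pos, hl₀, heq⟩ := hquo a (Finset.mem_Icc.mpr ⟨ha1, haN⟩) u' hu'
            rw [heq]
            have h1 : (0:ℚ) < (l₀:ℚ) := by exact_mod_cast hl₀pos
            have h2 : (0:ℚ) < (u':ℚ) := by exact_mod_cast hU u' hu'
            have h3 : (lam:ℚ) = (1 + (a:ℚ)^(m+1) * (u':ℚ)) * (l₀:ℚ) := by exact_mod_cast hl₀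
            rw [h3]
            push_cast
            have h4 : (0:ℚ) < 1 + (a:ℚ)^(m+1) * (u':ℚ) := by positivity
            field_simp
            ring
          by_cases hsucc : ∃ q : ι, ∃ u' ∈ U,
              χ (Fin.snoc (fun j => x₀ j + d * (((w + a • g M (q, none)) j : ℕ) : ℚ))
                (Y₀ + (ν / ((M:ℚ) * (lam:ℚ)) +
                  ν / ((a:ℚ)^(m+1) * ((M:ℚ) * (lam:ℚ)) * (u':ℚ))))) = c₀
          · obtain ⟨q, u', hu', happ⟩ := hsucc
            have hu'0 : (0:ℚ) < (u':ℚ) := by exact_mod_cast hU u' hu'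
            have hbase := hmono' (q, none)
            refine ⟨Fin.snoc (fun j => x₀ j + d * (((w + a • g M (q, none)) j : ℕ) : ℚ))
                (Y₀ + ν / ((M:ℚ) * (lam:ℚ))),
              Fin.snoc (fun j => if j = 0 then d * ((a:ℚ) * ((M:ℚ) * (lam:ℚ) * (u':ℚ)))
                  else d * (a:ℚ))
                (ν / ((a:ℚ)^(m+1) * ((M:ℚ) * (lam:ℚ)) * (u':ℚ))), ?_, ?_, ?_⟩
            · intro i
              refine Fin.lastCases ?_ (fun j => ?_) i
              · rw [Fin.snoc_last]; positivity
              · rw [Fin.snoc_castSucc]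
                split <;> positivity
            · rw [Fin.prod_univ_castSucc]
              simp only [Fin.snoc_castSucc, Fin.snoc_last]
              rw [Fin.prod_univ_succ]
              simp only [if_pos rfl, Fin.succ_ne_zero, if_neg, ite_false, eq_self_iff_true, if_true, ↓reduceIte]
              rw [Finset.prod_const, Finset.card_univ, Fintype.card_fin]
              rw [← hdν]
              field_simp
              ring
            · intro i
              refine Fin.lastCases ?_ (fun j => ?_) i
              · simp only [Fin.snoc_last]
                rw [upd_last]
                have hassoc : Y₀ + ν / ((M:ℚ) * (lam:ℚ)) + ν / ((a:ℚ)^(m+1) * ((M:ℚ) * (lam:ℚ)) * (u':ℚ))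
                    = Y₀ + (ν / ((M:ℚ) * (lam:ℚ)) + ν / ((a:ℚ)^(m+1) * ((M:ℚ) * (lam:ℚ)) * (u':ℚ))) := by
                  ring
                rw [hassoc, happ, hbase]
              · simp only [Fin.snoc_castSucc]
                rw [upd_cast]
                by_cases hj : j = 0
                · subst hj
                  have hXeq : Function.update
                      (fun j' => x₀ j' + d * (((w + a • g M (q, none)) j' : ℕ) : ℚ)) 0
                      ((x₀ 0 + d * (((w + a • g M (q, none)) 0 : ℕ) : ℚ)) +
                        (if (0 : Fin (m+1)) = 0 then d * ((a:ℚ) * ((M:ℚ) * (lam:ℚ) * (u':ℚ)))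
                          else d * (a:ℚ)))
                      = fun j' => x₀ j' + d *
                          (((w + a • g M (q, some (Sum.inr ⟨u', hu'⟩))) j' : ℕ) : ℚ) := by
                    funext j'
                    rcases eq_or_ne j' 0 with rfl | hj'
                    · rw [Function.update_self]
                      simp only [hg, Pi.add_apply, Pi.smul_apply, smul_eq_mul, Option.elim,
                        Sum.elim_inr, Pi.single_eq_same, Pi.zero_apply, if_pos rfl]
                      push_cast; ring
                    · rw [Function.update_of_ne hj']
                      simp only [hg, Pi.add_apply, Pi.smul_apply, smul_eq_mul, Option.elim,
                        Sum.elim_inr, Pi.single_eq_of_ne hj', Pi.zero_apply]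
                  rw [hXeq, hmono' (q, some (Sum.inr ⟨u', hu'⟩)), hbase]
                · have hXeq : Function.update
                      (fun j' => x₀ j' + d * (((w + a • g M (q, none)) j' : ℕ) : ℚ)) j
                      ((x₀ j + d * (((w + a • g M (q, none)) j : ℕ) : ℚ)) +
                        (if j = 0 then d * ((a:ℚ) * ((M:ℚ) * (lam:ℚ) * (u':ℚ)))
                          else d * (a:ℚ)))
                      = fun j' => x₀ j' + d *
                          (((w + a • g M (q, some (Sum.inl j))) j' : ℕ) : ℚ) := by
                    funext j'
                    rcases eq_or_ne j' j with rfl | hj'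
                    · rw [Function.update_self]
                      simp only [hg, Pi.add_apply, Pi.smul_apply, smul_eq_mul, Option.elim,
                        Sum.elim_inl, Pi.single_eq_same, Pi.zero_apply, if_neg hj]
                      push_cast; ring
                    · rw [Function.update_of_ne hj']
                      simp only [hg, Pi.add_apply, Pi.smul_apply, smul_eq_mul, Option.elim,
                        Sum.elim_inl, Pi.single_eq_of_ne hj', Pi.zero_apply]
                  rw [hXeq, hmono' (q, some (Sum.inl j)), hbase]
          · push_neg at hsucc
            have hcard' : (Cs.erase c₀).card ≤ k := by
              rw [Finset.card_erase_of_mem hc₀Cs]; omega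
            have hMlam : 0 < M * lam := Nat.mul_pos hM hlam_pos
            refine IH (M * lam) hMlam (d * (a:ℚ)) (ν / (a:ℚ)^(m+1)) (Y₀ + ν / ((M:ℚ) * (lam:ℚ)))
              (fun j => x₀ j + d * (w j : ℚ)) (by positivity) (by positivity) ?_
              (Cs.erase c₀) hcard' ?_
            · rw [mul_pow, ← hdν]
              field_simp
            · intro q' u' hu'
              have hcol : (fun j => (x₀ j + d * (w j : ℚ)) + (d * (a:ℚ)) * ((T (M * lam) q' j : ℕ) : ℚ))
                  = fun j => x₀ j + d * (((w + a • g M (q', none)) j : ℕ) : ℚ) := by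
                funext j'
                simp only [hg, Pi.add_apply, Pi.smul_apply, smul_eq_mul, Option.elim,
                  Pi.zero_apply, add_zero]
                push_cast; ring
              have hrow1 : (Y₀ + ν / ((M:ℚ) * (lam:ℚ))) +
                    (ν / (a:ℚ)^(m+1)) / (((M * lam : ℕ) : ℚ) * (u':ℚ))
                  = Y₀ + (ν / ((M:ℚ) * (lam:ℚ)) +
                    ν / ((a:ℚ)^(m+1) * ((M:ℚ) * (lam:ℚ)) * (u':ℚ))) := by
                push_cast
                rw [div_div]
                ring
              have hpt : (Fin.snoc (fun j => (x₀ j + d * (w j : ℚ)) +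
                    (d * (a:ℚ)) * ((T (M * lam) q' j : ℕ) : ℚ))
                    ((Y₀ + ν / ((M:ℚ) * (lam:ℚ))) +
                      (ν / (a:ℚ)^(m+1)) / (((M * lam : ℕ) : ℚ) * (u':ℚ))) : Fin (m+2) → ℚ)
                  = Fin.snoc (fun j => x₀ j + d * (((w + a • g M (q', none)) j : ℕ) : ℚ))
                    (Y₀ + (ν / ((M:ℚ) * (lam:ℚ)) +
                      ν / ((a:ℚ)^(m+1) * ((M:ℚ) * (lam:ℚ)) * (u':ℚ)))) := by
                rw [hcol, hrow1]
              refine Finset.mem_erase.mpr ⟨?_, ?_⟩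
              · show χ (Fin.snoc (fun j => (x₀ j + d * (w j : ℚ)) +
                    (d * (a:ℚ)) * ((T (M * lam) q' j : ℕ) : ℚ))
                    ((Y₀ + ν / ((M:ℚ) * (lam:ℚ))) +
                      (ν / (a:ℚ)^(m+1)) / (((M * lam : ℕ) : ℚ) * (u':ℚ)))) ≠ c₀
                rw [hpt]
                exact hsucc q' u' hu'
              · show χ (Fin.snoc (fun j => (x₀ j + d * (w j : ℚ)) +
                    (d * (a:ℚ)) * ((T (M * lam) q' j : ℕ) : ℚ))
                    ((Y₀ + ν / ((M:ℚ) * (lam:ℚ))) +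
                      (ν / (a:ℚ)^(m+1)) / (((M * lam : ℕ) : ℚ) * (u':ℚ)))) ∈ Cs
                rw [hpt, hrow u' hu']
                exact hInCs (q', none) _ (hρmem u' hu')
  obtain ⟨U, ι, _instF, _instN, T, hU, main⟩ := claim h
  refine main 1 one_pos 1 c 0 0 one_pos hc (by simp) Finset.univ (by simp) ?_
  intro q u hu
  exact Finset.mem_univ _

/-- Any finite coloring of `ℚⁿ` admits a monochromatic standard simplex of any prescribed
positive rational volume `V`: there is a vertex `v` and positive side lengths `a i` with
`∏ a i = n! · V` such that `v` and all the points `v + a i • eᵢ` get the same color. -/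
theorem mono_standard_simplex (n : ℕ) (hn : 2 ≤ n) (h : ℕ) (hh : 1 ≤ h)
    (χ : (Fin n → ℚ) → Fin h) (V : ℚ) (hV : 0 < V) :
    ∃ (v : Fin n → ℚ) (a : Fin n → ℚ), (∀ i, 0 < a i) ∧
      (∏ i, a i) = (n.factorial : ℚ) * V ∧
      ∀ i, χ (Function.update v i (v i + a i)) = χ v := by
  obtain ⟨m, rfl⟩ : ∃ m, n = m + 2 := ⟨n - 2, by omega⟩
  have hfac : (0:ℚ) < ((m+2).factorial : ℚ) := by
    exact_mod_cast Nat.factorial_pos (m+2)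
  exact main_aux m h hh χ (((m+2).factorial : ℚ) * V) (mul_pos hfac hV)
end

section
/- Two standard simplices in ℚⁿ lie in the same orbit under the group generated by rational translations and volume-preserving axis diagonal maps U^{k₁,…,k_n}_P : (x₁,…,x_n) ↦ (p₁+k₁(x₁−p₁), …, p_n+k_n(x_n−p_n)) with k_i ∈ ℚ, k_i > 0, k₁⋯k_n = 1, if and only if their volumes are equal. -/
open Finset

/-- The generators of the group: rational translations and volume-preserving positive
diagonal affine maps. -/
def genMap (n : ℕ) (f : (Fin n → ℚ) → (Fin n → ℚ)) : Prop :=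
  (∃ v : Fin n → ℚ, f = fun x => x + v) ∨
  (∃ p k : Fin n → ℚ, (∀ i, 0 < k i) ∧ (∏ i, k i) = 1 ∧
    f = fun x => fun i => p i + k i * (x i - p i))

/-- The standard simplex with origin `v` and side lengths `a`, as a set of `n + 1` vertices. -/
def stdSimplexSet (n : ℕ) (v a : Fin n → ℚ) : Set (Fin n → ℚ) :=
  insert v {q | ∃ i, q = Function.update v i (v i + a i)}

lemma image_affine (n : ℕ) (w K v a : Fin n → ℚ) :
    (fun x : Fin n → ℚ => fun i => w i + K i * x i) '' stdSimplexSet n v a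
      = stdSimplexSet n (fun i => w i + K i * v i) (fun i => K i * a i) := by
  unfold stdSimplexSet
  rw [Set.image_insert_eq]
  congr 1
  ext q
  simp only [Set.mem_image, Set.mem_setOf_eq]
  constructor
  · rintro ⟨x, ⟨i, rfl⟩, rfl⟩
    refine ⟨i, ?_⟩
    funext j
    by_cases h : j = i
    · subst h; simp [Function.update_self]; ring
    · simp [Function.update_of_ne h]
  · rintro ⟨i, rfl⟩
    refine ⟨Function.update v i (v i + a i), ⟨i, rfl⟩, ?_⟩
    funext j
    by_cases h : j = i
    · subst h; simp [Function.update_self]; ring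
    · simp [Function.update_of_ne h]

lemma fold_form (n : ℕ) (fs : List ((Fin n → ℚ) → (Fin n → ℚ)))
    (h : ∀ f ∈ fs, genMap n f) :
    ∃ w K : Fin n → ℚ, (∀ i, 0 < K i) ∧ (∏ i, K i) = 1 ∧
      fs.foldr (· ∘ ·) id = fun x => fun i => w i + K i * x i := by
  induction fs with
  | nil =>
    exact ⟨0, 1, fun i => one_pos, by simp, by funext x i; simp⟩
  | cons f fs ih =>
    obtain ⟨w, K, hK, hKprod, hg⟩ := ih (fun g hg => h g (List.mem_cons_of_mem _ hg))
    have hf := h f (List.mem_cons_self)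
    rcases hf with ⟨v₀, rfl⟩ | ⟨p, k, hk, hkprod, rfl⟩
    · refine ⟨fun i => w i + v₀ i, K, hK, hKprod, ?_⟩
      simp only [List.foldr_cons, hg]
      funext x i
      simp only [Function.comp_apply, Pi.add_apply]
      ring
    · refine ⟨fun i => p i + k i * (w i - p i), fun i => k i * K i,
        fun i => mul_pos (hk i) (hK i),
        by rw [prod_mul_distrib, hkprod, hKprod, mul_one], ?_⟩
      simp only [List.foldr_cons, hg]
      funext x i
      simp only [Function.comp_apply]
      ring

lemma le_of_mem_std (n : ℕ) (v b : Fin n → ℚ) (hb : ∀ i, 0 < b i)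
    (q : Fin n → ℚ) (hq : q ∈ stdSimplexSet n v b) : ∀ i, v i ≤ q i := by
  rcases hq with rfl | ⟨i, rfl⟩
  · exact fun i => le_rfl
  · intro j
    by_cases h : j = i
    · subst h; rw [Function.update_self]; linarith [hb j]
    · rw [Function.update_of_ne h]

lemma std_eq (n : ℕ) (v b v' a' : Fin n → ℚ) (hb : ∀ i, 0 < b i) (ha' : ∀ i, 0 < a' i)
    (h : stdSimplexSet n v b = stdSimplexSet n v' a') : v = v' ∧ b = a' := by
  have hv : v = v' := by
    have h1 : ∀ i, v i ≤ v' i := by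
      apply le_of_mem_std n v b hb
      rw [h]; exact Set.mem_insert _ _
    have h2 : ∀ i, v' i ≤ v i := by
      apply le_of_mem_std n v' a' ha'
      rw [← h]; exact Set.mem_insert _ _
    funext i; exact le_antisymm (h1 i) (h2 i)
  subst hv
  refine ⟨rfl, funext fun i => ?_⟩
  have hmem : Function.update v i (v i + b i) ∈ stdSimplexSet n v a' := by
    rw [← h]; exact Set.mem_insert_of_mem _ ⟨i, rfl⟩
  rcases hmem with heq | ⟨j, heq⟩
  · have := congrFun heq i
    rw [Function.update_self] at this
    linarith [hb i]
  · by_cases hij : i = j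
    · subst hij
      have := congrFun heq i
      rw [Function.update_self, Function.update_self] at this
      linarith
    · have := congrFun heq i
      rw [Function.update_self, Function.update_of_ne hij] at this
      linarith [hb i]

/-- Two standard simplices lie in the same orbit under the group generated by rational
translations and volume-preserving positive diagonal maps iff their volumes are equal.
(Since the inverse of each generator is again a generator, group elements are exactly
finite compositions of generators.) -/
theorem stdSimplex_same_orbit_iff (n : ℕ) (hn : 2 ≤ n)
    (v a v' a' : Fin n → ℚ) (ha : ∀ i, 0 < a i) (ha' : ∀ i, 0 < a' i) :
    (∃ fs : List ((Fin n → ℚ) → (Fin n → ℚ)), (∀ f ∈ fs, genMap n f) ∧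
      (fs.foldr (· ∘ ·) id) '' stdSimplexSet n v a = stdSimplexSet n v' a') ↔
    (∏ i, a i) / (n.factorial : ℚ) = (∏ i, a' i) / (n.factorial : ℚ) := by
  have hane : (∏ i, a i) ≠ 0 := (prod_pos (fun i _ => ha i)).ne'
  constructor
  · rintro ⟨fs, hgen, himg⟩
    obtain ⟨w, K, hK, hKprod, hf⟩ := fold_form n fs hgen
    rw [hf, image_affine] at himg
    obtain ⟨-, hb⟩ := std_eq n _ _ _ _ (fun i => mul_pos (hK i) (ha i)) ha' himg
    have : ∏ i, a' i = ∏ i, a i := by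
      rw [← hb, prod_mul_distrib, hKprod, one_mul]
    rw [this]
  · intro h
    have hfac : ((n.factorial : ℚ)) ≠ 0 := Nat.cast_ne_zero.mpr n.factorial_ne_zero
    have hprod : ∏ i, a i = ∏ i, a' i := by
      field_simp at h; exact h
    refine ⟨[fun x => x + (v' - v), fun x i => v i + (a' i / a i) * (x i - v i)],
      ?_, ?_⟩
    · intro f hf
      simp only [List.mem_cons, List.not_mem_nil, or_false] at hf
      rcases hf with rfl | rfl
      · exact Or.inl ⟨v' - v, rfl⟩
      · refine Or.inr ⟨v, fun i => a' i / a i, fun i => div_pos (ha' i) (ha i), ?_, rfl⟩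
        rw [prod_div_distrib, ← hprod, div_self hane]
    · have hmid : (fun x : Fin n → ℚ => fun i => v i + (a' i / a i) * (x i - v i)) ''
          stdSimplexSet n v a = stdSimplexSet n v a' := by
        have : (fun x : Fin n → ℚ => fun i => v i + (a' i / a i) * (x i - v i))
            = fun x : Fin n → ℚ => fun i =>
              (v i - (a' i / a i) * v i) + (a' i / a i) * x i := by
          funext x i; ring
        rw [this, image_affine]
        have h1 : (fun i => v i - a' i / a i * v i + a' i / a i * v i) = v := by
          funext i; ring
        have h2 : (fun i => a' i / a i * a i) = a' := by
          funext i; exact div_mul_cancel₀ _ (ha i).ne'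
        rw [h1, h2]
      have htr : (fun x : Fin n → ℚ => x + (v' - v)) '' stdSimplexSet n v a'
          = stdSimplexSet n v' a' := by
        have : (fun x : Fin n → ℚ => x + (v' - v))
            = fun x : Fin n → ℚ => fun i => (v' i - v i) + 1 * x i := by
          funext x i; simp only [Pi.add_apply, Pi.sub_apply]; ring
        rw [this, image_affine]
        have h1 : (fun i => v' i - v i + 1 * v i) = v' := by funext i; ring
        have h2 : (fun i => 1 * a' i) = a' := by funext i; rw [one_mul]
        rw [h1, h2]
      rw [show List.foldr (· ∘ ·) id
          [(fun x : Fin n → ℚ => x + (v' - v)),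
           (fun x : Fin n → ℚ => fun i => v i + (a' i / a i) * (x i - v i))]
          = (fun x : Fin n → ℚ => x + (v' - v)) ∘
            (fun x : Fin n → ℚ => fun i => v i + (a' i / a i) * (x i - v i)) from rfl,
        Set.image_comp, hmid, htr]
end

section
/- If for every coloring χ : ℚⁿ → Fin h there exists a monochromatic standard simplex of volume 1/n!, then for every such coloring and every positive rational V there exist infinitely many monochromatic standard simplices of volume V, and moreover infinitely many of them share the same color. -/
open Finset

section Aux

variable {n h : ℕ}

/-- The `i`-th non-origin vertex of the standard simplex. -/
private def vtx (v a : Fin n → ℚ) (i : Fin n) : Fin n → ℚ :=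
  Function.update v i (v i + a i)

/-- `(v, a)` is a monochromatic simplex of "product" `c` for the coloring `κ`. -/
private def IsMono (κ : (Fin n → ℚ) → Fin h) (c : ℚ) (v a : Fin n → ℚ) : Prop :=
  (∀ i, 0 < a i) ∧ (∏ i, a i) = c ∧ ∀ i, κ (vtx v a i) = κ v

/-- Scaling step: from monochromatic product-1 simplices for all colorings to
monochromatic product-`c` simplices for all colorings. -/
private lemma lemA (hn : 2 ≤ n)
    (H : ∀ χ : (Fin n → ℚ) → Fin h, ∃ (v : Fin n → ℚ) (a : Fin n → ℚ),
      (∀ i, 0 < a i) ∧ (∏ i, a i) = 1 ∧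
      ∀ i, χ (Function.update v i (v i + a i)) = χ v)
    (c : ℚ) (hc : 0 < c) :
    ∀ χ : (Fin n → ℚ) → Fin h, ∃ v a, IsMono χ c v a := by
  intro χ
  haveI : NeZero n := ⟨by omega⟩
  set d : Fin n → ℚ := fun i => if i = 0 then c else 1 with hd
  have hdpos : ∀ i, 0 < d i := by
    intro i; rw [hd]; dsimp only; split
    · exact hc
    · norm_num
  have hdprod : ∏ i, d i = c := by
    rw [hd]
    rw [Finset.prod_eq_single (0 : Fin n)]
    · simp
    · intro b _ hb; simp [hb]
    · simp
  obtain ⟨v, a, hpos, hprod, hmono⟩ := H (fun x => χ (fun j => d j * x j))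
  refine ⟨fun j => d j * v j, fun j => d j * a j,
    fun i => mul_pos (hdpos i) (hpos i), ?_, ?_⟩
  · rw [Finset.prod_mul_distrib, hdprod, hprod, mul_one]
  · intro i
    have key : vtx (fun j => d j * v j) (fun j => d j * a j) i
        = fun j => d j * (Function.update v i (v i + a i)) j := by
      funext j
      by_cases hj : j = i
      · subst hj; simp [vtx, Function.update_self, mul_add]
      · simp [vtx, Function.update_of_ne hj]
    show χ (vtx (fun j => d j * v j) (fun j => d j * a j) i) = χ (fun j => d j * v j)
    rw [key]
    exact hmono i

/-- Compactness step: there is a finite window `X` containing a monochromatic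
product-`c` simplex for every coloring. -/
private lemma lemB (c : ℚ)
    (H' : ∀ κ : (Fin n → ℚ) → Fin h, ∃ v a, IsMono κ c v a) :
    ∃ X : Finset (Fin n → ℚ), ∀ κ : (Fin n → ℚ) → Fin h,
      ∃ v a, IsMono κ c v a ∧ v ∈ X ∧ ∀ i, vtx v a i ∈ X := by
  by_contra hcon
  have hcon' : ∀ X : Finset (Fin n → ℚ), ∃ κ : (Fin n → ℚ) → Fin h,
      ¬ ∃ v a, IsMono κ c v a ∧ v ∈ X ∧ ∀ i, vtx v a i ∈ X := by
    intro X
    exact not_forall.mp (fun hX => hcon ⟨X, hX⟩)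
  letI : TopologicalSpace (Fin h) := ⊥
  haveI : DiscreteTopology (Fin h) := ⟨rfl⟩
  haveI : CompactSpace ((Fin n → ℚ) → Fin h) := inferInstance
  set Z : Finset (Fin n → ℚ) → Set ((Fin n → ℚ) → Fin h) := fun X =>
    {κ | ∃ v a, IsMono κ c v a ∧ v ∈ X ∧ ∀ i, vtx v a i ∈ X}ᶜ with hZ
  have hopen : ∀ X : Finset (Fin n → ℚ),
      IsOpen {κ : (Fin n → ℚ) → Fin h | ∃ v a, IsMono κ c v a ∧ v ∈ X ∧ ∀ i, vtx v a i ∈ X} := by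
    intro X
    have hrw : {κ : (Fin n → ℚ) → Fin h | ∃ v a, IsMono κ c v a ∧ v ∈ X ∧ ∀ i, vtx v a i ∈ X}
        = ⋃ (v : Fin n → ℚ), ⋃ (a : Fin n → ℚ),
          {κ : (Fin n → ℚ) → Fin h |
            ((∀ i, 0 < a i) ∧ (∏ i, a i) = c ∧ v ∈ X ∧ ∀ i, vtx v a i ∈ X) ∧
            ∀ i, κ (vtx v a i) = κ v} := by
      ext κ
      simp only [Set.mem_setOf_eq, Set.mem_iUnion, IsMono]
      tauto
    rw [hrw]
    refine isOpen_iUnion fun v => isOpen_iUnion fun a => ?_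
    by_cases hP : (∀ i, 0 < a i) ∧ (∏ i, a i) = c ∧ v ∈ X ∧ ∀ i, vtx v a i ∈ X
    · have hrw2 : {κ : (Fin n → ℚ) → Fin h |
          ((∀ i, 0 < a i) ∧ (∏ i, a i) = c ∧ v ∈ X ∧ ∀ i, vtx v a i ∈ X) ∧
          ∀ i, κ (vtx v a i) = κ v}
          = ⋂ i, {κ : (Fin n → ℚ) → Fin h | κ (vtx v a i) = κ v} := by
        ext κ
        simp only [Set.mem_setOf_eq, Set.mem_iInter]
        exact ⟨fun hk => hk.2, fun hk => ⟨hP, hk⟩⟩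
      rw [hrw2]
      refine isOpen_iInter_of_finite fun i => ?_
      have : {κ : (Fin n → ℚ) → Fin h | κ (vtx v a i) = κ v}
          = (fun κ : (Fin n → ℚ) → Fin h => (κ (vtx v a i), κ v)) ⁻¹' {p | p.1 = p.2} := rfl
      rw [this]
      exact (((continuous_apply _).prodMk (continuous_apply _))).isOpen_preimage _
        (isOpen_discrete _)
    · have hrw2 : {κ : (Fin n → ℚ) → Fin h |
          ((∀ i, 0 < a i) ∧ (∏ i, a i) = c ∧ v ∈ X ∧ ∀ i, vtx v a i ∈ X) ∧
          ∀ i, κ (vtx v a i) = κ v} = ∅ := by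
        ext κ
        simp only [Set.mem_setOf_eq, Set.mem_empty_iff_false, iff_false]
        exact fun hk => hP hk.1
      rw [hrw2]
      exact isOpen_empty
  have hcl : ∀ X, IsClosed (Z X) := fun X => (hopen X).isClosed_compl
  have hne : ∀ X, (Z X).Nonempty := by
    intro X
    obtain ⟨κ, hκ⟩ := hcon' X
    exact ⟨κ, hκ⟩
  have hdir : Directed (· ⊇ ·) Z := by
    intro X Y
    refine ⟨X ∪ Y, ?_, ?_⟩ <;>
      · intro κ hκ hex
        rcases hex with ⟨v, a, hm, hv, hvt⟩
        exact hκ ⟨v, a, hm, by simp [Finset.mem_union, hv], fun i => by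
          simp [Finset.mem_union, hvt i]⟩
  obtain ⟨κ, hκ⟩ := IsCompact.nonempty_iInter_of_directed_nonempty_isCompact_isClosed Z hdir hne
    (fun X => (hcl X).isCompact) hcl
  obtain ⟨v, a, hm⟩ := H' κ
  have hX : κ ∈ Z (insert v (Finset.image (fun i => vtx v a i) Finset.univ)) :=
    Set.mem_iInter.mp hκ _
  exact hX ⟨v, a, hm, Finset.mem_insert_self _ _,
    fun i => Finset.mem_insert_of_mem (Finset.mem_image_of_mem _ (Finset.mem_univ i))⟩

/-- Avoidance step: there is a monochromatic product-`c` simplex whose origin avoids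
any prescribed finite set. -/
private lemma lemC (hn : 2 ≤ n) (c : ℚ) (χ : (Fin n → ℚ) → Fin h) (X : Finset (Fin n → ℚ))
    (hX : ∀ κ : (Fin n → ℚ) → Fin h, ∃ v a, IsMono κ c v a ∧ v ∈ X ∧ ∀ i, vtx v a i ∈ X)
    (P : Set (Fin n → ℚ)) (hP : P.Finite) :
    ∃ v a, IsMono χ c v a ∧ v ∉ P := by
  haveI : NeZero n := ⟨by omega⟩
  set bad : Set ℚ :=
    (fun q : (Fin n → ℚ) × (Fin n → ℚ) => q.1 0 - q.2 0) '' (P ×ˢ (X : Set (Fin n → ℚ)))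
    with hbad
  have hbadfin : bad.Finite := (hP.prod X.finite_toSet).image _
  obtain ⟨t, ht⟩ := hbadfin.infinite_compl.nonempty
  have ht' : t ∉ bad := ht
  obtain ⟨v, a, ⟨hpos, hprod, hmono⟩, hv, -⟩ := hX (fun x => χ (fun j => x j + t))
  refine ⟨fun j => v j + t, a, ⟨hpos, hprod, ?_⟩, ?_⟩
  · intro i
    have key : vtx (fun j => v j + t) a i
        = fun j => (Function.update v i (v i + a i)) j + t := by
      funext j
      by_cases hj : j = i
      · subst hj; simp [vtx, Function.update_self]; ring
      · simp [vtx, Function.update_of_ne hj]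
    show χ (vtx (fun j => v j + t) a i) = χ (fun j => v j + t)
    rw [key]
    exact hmono i
  · intro hmem
    apply ht'
    rw [hbad]
    refine ⟨⟨fun j => v j + t, v⟩, ⟨hmem, hv⟩, ?_⟩
    simp

end Aux

/-- If every `h`-coloring of `ℚⁿ` admits a monochromatic standard simplex of volume `1/n!`,
then for every such coloring and every positive rational `V` there are infinitely many
monochromatic standard simplices of volume `V`, and infinitely many of them share one color. -/
theorem infinitely_many_mono_simplices (n h : ℕ) (hn : 2 ≤ n) (hh : 1 ≤ h)
    (H : ∀ χ : (Fin n → ℚ) → Fin h, ∃ (v : Fin n → ℚ) (a : Fin n → ℚ),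
      (∀ i, 0 < a i) ∧ (∏ i, a i) = 1 ∧
      ∀ i, χ (Function.update v i (v i + a i)) = χ v) :
    ∀ (χ : (Fin n → ℚ) → Fin h) (V : ℚ), 0 < V →
      {S : Set (Fin n → ℚ) | ∃ (v : Fin n → ℚ) (a : Fin n → ℚ),
        (∀ i, 0 < a i) ∧ (∏ i, a i) = (n.factorial : ℚ) * V ∧
        (∀ i, χ (Function.update v i (v i + a i)) = χ v) ∧
        S = stdSimplexSet n v a}.Infinite ∧
      ∃ c : Fin h,
        {S : Set (Fin n → ℚ) | ∃ (v : Fin n → ℚ) (a : Fin n → ℚ),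
          (∀ i, 0 < a i) ∧ (∏ i, a i) = (n.factorial : ℚ) * V ∧
          (∀ i, χ (Function.update v i (v i + a i)) = χ v) ∧ χ v = c ∧
          S = stdSimplexSet n v a}.Infinite := by
  intro χ V hV
  set cc : ℚ := (n.factorial : ℚ) * V with hcc
  have hccpos : 0 < cc := mul_pos (by exact_mod_cast n.factorial_pos) hV
  have H' := lemA hn H cc hccpos
  obtain ⟨X, hX⟩ := lemB cc H'
  have key : ∀ P : Set (Fin n → ℚ), P.Finite → ∃ v a, IsMono χ cc v a ∧ v ∉ P :=
    fun P hP => lemC hn cc χ X hX P hP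
  have hstdfin : ∀ v a : Fin n → ℚ, (stdSimplexSet n v a).Finite := by
    intro v a
    have hr : {q : Fin n → ℚ | ∃ i, q = Function.update v i (v i + a i)}
        = Set.range (fun i => Function.update v i (v i + a i)) := by
      ext q; simp [Set.range, eq_comm]
    show (insert v {q : Fin n → ℚ | ∃ i, q = Function.update v i (v i + a i)}).Finite
    rw [hr]
    exact (Set.finite_range _).insert v
  have hinf1 : {S : Set (Fin n → ℚ) | ∃ (v : Fin n → ℚ) (a : Fin n → ℚ),
      (∀ i, 0 < a i) ∧ (∏ i, a i) = (n.factorial : ℚ) * V ∧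
      (∀ i, χ (Function.update v i (v i + a i)) = χ v) ∧
      S = stdSimplexSet n v a}.Infinite := by
    intro hfin
    have hPfin : (⋃₀ {S : Set (Fin n → ℚ) | ∃ (v : Fin n → ℚ) (a : Fin n → ℚ),
        (∀ i, 0 < a i) ∧ (∏ i, a i) = (n.factorial : ℚ) * V ∧
        (∀ i, χ (Function.update v i (v i + a i)) = χ v) ∧
        S = stdSimplexSet n v a}).Finite := by
      refine Set.Finite.sUnion hfin ?_
      rintro S ⟨v, a, -, -, -, rfl⟩
      exact hstdfin v a
    obtain ⟨v, a, hm, hvP⟩ := key _ hPfin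
    apply hvP
    refine Set.mem_sUnion.mpr ⟨stdSimplexSet n v a, ⟨v, a, hm.1, hm.2.1, hm.2.2, rfl⟩, ?_⟩
    exact Set.mem_insert v _
  refine ⟨hinf1, ?_⟩
  by_contra hcon
  push_neg at hcon
  apply hinf1
  have hsub : {S : Set (Fin n → ℚ) | ∃ (v : Fin n → ℚ) (a : Fin n → ℚ),
      (∀ i, 0 < a i) ∧ (∏ i, a i) = (n.factorial : ℚ) * V ∧
      (∀ i, χ (Function.update v i (v i + a i)) = χ v) ∧
      S = stdSimplexSet n v a}
      ⊆ ⋃ c : Fin h, {S : Set (Fin n → ℚ) | ∃ (v : Fin n → ℚ) (a : Fin n → ℚ),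
        (∀ i, 0 < a i) ∧ (∏ i, a i) = (n.factorial : ℚ) * V ∧
        (∀ i, χ (Function.update v i (v i + a i)) = χ v) ∧ χ v = c ∧
        S = stdSimplexSet n v a} := by
    rintro S ⟨v, a, h1, h2, h3, h4⟩
    exact Set.mem_iUnion.mpr ⟨χ v, v, a, h1, h2, h3, rfl, h4⟩
  exact Set.Finite.subset (Set.finite_iUnion fun c => hcon c) hsub
end
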